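/- Let W ∈ ℝ^{m×n}, T ∈ ℝ^{m×m} diagonal positive definite, ρ > 0, 0 ≤ α ≤ β, and suppose WWᵀ ⪯ (2ρ/(α+β)²)·T^{−1}. Then h(x) = √ρ·x − ((α+β)/√ρ)·Wᵀ T Φ(W x) is √ρ-Lipschitz in ℓ₂ norm, where Φ applies a scalar function slope-restricted in [α, β] entrywise. -/

import Mathlib

open Matrix

/-- View a plain vector as an element of Euclidean space. -/
def eu {n : ℕ} (v : Fin n → ℝ) : EuclideanSpace ℝ (Fin n) := WithLp.toLp 2 v

/-- View an element of Euclidean space as a plain vector. -/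
def pl {n : ℕ} (v : EuclideanSpace ℝ (Fin n)) : Fin n → ℝ := v

/-- Proposition 2: if `WWᵀ ⪯ (2ρ/(α+β)²)·T⁻¹` with `T` diagonal positive definite,
then `h(x) = √ρ·x − ((α+β)/√ρ)·WᵀTΦ(Wx)` is `√ρ`-Lipschitz in ℓ₂ norm. -/
theorem rho_lipschitz_layer {n m : ℕ} (φ : ℝ → ℝ) (α β ρ : ℝ)
    (hα : 0 ≤ α) (hαβ : α ≤ β) (hρ : 0 < ρ)
    (hslope : ∀ a b : ℝ, a ≠ b → α ≤ (φ a - φ b) / (a - b) ∧ (φ a - φ b) / (a - b) ≤ β)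
    (W : Matrix (Fin m) (Fin n) ℝ) (T : Matrix (Fin m) (Fin m) ℝ)
    (hTdiag : T.IsDiag) (hTpd : T.PosDef)
    (hW : ((2 * ρ / (α + β) ^ 2) • T⁻¹ - W * Wᵀ).PosSemidef) :
    ∀ x x' : EuclideanSpace ℝ (Fin n),
      ‖eu ((Real.sqrt ρ • pl x -
            ((α + β) / Real.sqrt ρ) • Wᵀ.mulVec (T.mulVec (fun i => φ (W.mulVec (pl x) i)))) -
           (Real.sqrt ρ • pl x' -
            ((α + β) / Real.sqrt ρ) • Wᵀ.mulVec (T.mulVec (fun i => φ (W.mulVec (pl x') i)))))‖ ≤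
      Real.sqrt ρ * ‖x - x'‖ := by
  intro x x'
  classical
  set c : ℝ := (α + β) / Real.sqrt ρ with hc
  set u : Fin n → ℝ := pl x - pl x' with hu
  set z : Fin m → ℝ := W.mulVec u with hz
  set Δ : Fin m → ℝ := fun i => φ (W.mulVec (pl x) i) - φ (W.mulVec (pl x') i) with hΔ
  set w : Fin m → ℝ := T.mulVec Δ with hw
  set y : Fin n → ℝ := Wᵀ.mulVec w with hy
  have hsρ : 0 < Real.sqrt ρ := Real.sqrt_pos.mpr hρ
  -- the argument of `eu` simplifies
  have hA : (Real.sqrt ρ • pl x -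
        c • Wᵀ.mulVec (T.mulVec (fun i => φ (W.mulVec (pl x) i)))) -
       (Real.sqrt ρ • pl x' -
        c • Wᵀ.mulVec (T.mulVec (fun i => φ (W.mulVec (pl x') i)))) =
      Real.sqrt ρ • u - c • y := by
    have hΔ' : (fun i => φ (W.mulVec (pl x) i)) - (fun i => φ (W.mulVec (pl x') i)) = Δ := rfl
    rw [hy, hw, ← hΔ', Matrix.mulVec_sub T, Matrix.mulVec_sub Wᵀ, hu, smul_sub, smul_sub]
    abel
  rw [hA]
  -- diagonal entries of T are positive
  have hT : ∀ i, 0 < T i i := fun i => by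
    have := hTpd.dotProduct_mulVec_pos (x := Pi.single i 1) (by simp [Pi.single_eq_same, Function.ne_iff])
    simpa [dotProduct, Matrix.mulVec, Pi.single_apply, Finset.sum_ite_eq',
      Finset.mul_sum] using this
  -- w is the entrywise product
  have hwi : ∀ i, w i = T i i * Δ i := by
    intro i
    rw [hw]
    show (∑ j, T i j * Δ j) = T i i * Δ i
    rw [Finset.sum_eq_single i (fun j _ hj => by rw [hTdiag (Ne.symm hj), zero_mul])
      (fun h => absurd (Finset.mem_univ i) h)]
  -- slope condition, entrywise
  have hzΔ : ∀ i, Δ i ^ 2 ≤ (α + β) * (z i * Δ i) := by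
    intro i
    have hzi : z i = W.mulVec (pl x) i - W.mulVec (pl x') i := by
      rw [hz, hu, Matrix.mulVec_sub]; rfl
    set a := W.mulVec (pl x) i with ha
    set b := W.mulVec (pl x') i with hb
    have hΔi : Δ i = φ a - φ b := rfl
    by_cases hab : a = b
    · simp [hΔi, hab]
    · obtain ⟨h1, h2⟩ := hslope a b hab
      rw [hΔi, hzi]
      rcases lt_or_gt_of_ne (sub_ne_zero.mpr hab) with hd | hd
      · -- a - b < 0
        have h1' : φ a - φ b ≤ α * (a - b) := by
          rw [le_div_iff_of_neg hd] at h1; linarith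
        have h2' : β * (a - b) ≤ φ a - φ b := by
          rw [div_le_iff_of_neg hd] at h2; linarith
        nlinarith [mul_nonneg (mul_nonneg hα (le_trans hα hαβ)) (sq_nonneg (a - b)),
          mul_nonneg (sub_nonneg.mpr h1') (sub_nonneg.mpr h2')]
      · have h1' : α * (a - b) ≤ φ a - φ b := by
          rw [le_div_iff₀ hd] at h1; linarith
        have h2' : φ a - φ b ≤ β * (a - b) := by
          rw [div_le_iff₀ hd] at h2; linarith
        nlinarith [mul_nonneg (mul_nonneg hα (le_trans hα hαβ)) (sq_nonneg (a - b)),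
          mul_nonneg (sub_nonneg.mpr h1') (sub_nonneg.mpr h2')]
  -- abbreviations for the scalar quantities
  set P : ℝ := ∑ i, u i ^ 2 with hP
  set Q : ℝ := ∑ i, z i * w i with hQ
  set R : ℝ := ∑ i, y i ^ 2 with hR
  set S : ℝ := ∑ i, T i i * Δ i ^ 2 with hS
  -- u ⬝ y = z ⬝ w
  have hF1 : ∑ i, u i * y i = Q := by
    have : u ⬝ᵥ (Wᵀ *ᵥ w) = (W *ᵥ u) ⬝ᵥ w := by
      rw [Matrix.dotProduct_mulVec, Matrix.vecMul_transpose]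
    simpa [dotProduct, hy, hz, hQ] using this
  -- y ⬝ y = w ⬝ (W Wᵀ w)
  have hF2 : R = w ⬝ᵥ ((W * Wᵀ) *ᵥ w) := by
    have : (Wᵀ *ᵥ w) ⬝ᵥ (Wᵀ *ᵥ w) = ((W * Wᵀ) *ᵥ w) ⬝ᵥ w := by
      rw [Matrix.dotProduct_mulVec, Matrix.vecMul_transpose, Matrix.mulVec_mulVec]
    rw [hR]
    calc (∑ i, y i ^ 2) = (Wᵀ *ᵥ w) ⬝ᵥ (Wᵀ *ᵥ w) := by
          simp [dotProduct, hy, sq]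
      _ = ((W * Wᵀ) *ᵥ w) ⬝ᵥ w := this
      _ = w ⬝ᵥ ((W * Wᵀ) *ᵥ w) := dotProduct_comm _ _
  -- T⁻¹ (T Δ) = Δ
  have hF4 : T⁻¹ *ᵥ w = Δ := by
    rw [hw, Matrix.mulVec_mulVec, Matrix.nonsing_inv_mul T hTpd.det_pos.ne'.isUnit,
      Matrix.one_mulVec]
  have hwΔ : w ⬝ᵥ Δ = S := by
    simp only [dotProduct, hS]
    exact Finset.sum_congr rfl fun i _ => by rw [hwi i]; ring
  -- PSD condition
  have hF7 : w ⬝ᵥ ((W * Wᵀ) *ᵥ w) ≤ (2 * ρ / (α + β) ^ 2) * S := by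
    have h0 := hW.dotProduct_mulVec_nonneg w
    simp only [star_trivial, Matrix.sub_mulVec, Matrix.smul_mulVec,
      dotProduct_sub, dotProduct_smul, smul_eq_mul] at h0
    rw [hF4, hwΔ] at h0
    linarith
  have hSQ : S ≤ (α + β) * Q := by
    rw [hS, hQ, Finset.mul_sum]
    apply Finset.sum_le_sum
    intro i _
    have := mul_le_mul_of_nonneg_left (hzΔ i) (hT i).le
    calc T i i * Δ i ^ 2 ≤ T i i * ((α + β) * (z i * Δ i)) := this
      _ = (α + β) * (z i * w i) := by rw [hwi i]; ring
  -- reduce the goal to an inequality of sums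
  have hnorm1 : ‖eu (Real.sqrt ρ • u - c • y)‖ =
      Real.sqrt (∑ i, (Real.sqrt ρ * u i - c * y i) ^ 2) := by
    rw [EuclideanSpace.norm_eq]
    congr 1
    exact Finset.sum_congr rfl fun i _ => by
      rw [Real.norm_eq_abs, sq_abs]; rfl
  have hnorm2 : ‖x - x'‖ = Real.sqrt P := by
    rw [EuclideanSpace.norm_eq, hP]
    congr 1
    exact Finset.sum_congr rfl fun i _ => by
      rw [Real.norm_eq_abs, sq_abs]; rfl
  rw [hnorm1, hnorm2, ← Real.sqrt_mul hρ.le]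
  apply Real.sqrt_le_sqrt
  -- the main quadratic inequality
  have hexp : ∀ i, (Real.sqrt ρ * u i - c * y i) ^ 2 =
      ρ * u i ^ 2 - 2 * (α + β) * (u i * y i) + ((α + β) ^ 2 / ρ) * y i ^ 2 := by
    intro i
    have h1 : Real.sqrt ρ * c = α + β := by
      rw [hc, mul_div_cancel₀ _ hsρ.ne']
    have h2 : c ^ 2 = (α + β) ^ 2 / ρ := by
      rw [hc, div_pow, Real.sq_sqrt hρ.le]
    have : (Real.sqrt ρ * u i - c * y i) ^ 2 =
        Real.sqrt ρ ^ 2 * u i ^ 2 - 2 * (Real.sqrt ρ * c) * (u i * y i) + c ^ 2 * y i ^ 2 := by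
      ring
    rw [this, Real.sq_sqrt hρ.le, h1, h2]
  rw [Finset.sum_congr rfl fun i _ => hexp i]
  rw [Finset.sum_add_distrib, Finset.sum_sub_distrib, ← Finset.mul_sum, ← Finset.mul_sum,
    ← Finset.mul_sum, ← hP, hF1, ← hR]
  by_cases hs0 : α + β = 0
  · simp [hs0, hρ.ne']
  · have hspos : 0 < α + β := lt_of_le_of_ne (by linarith [le_trans hα hαβ]) (Ne.symm hs0)
    have hRS : ((α + β) ^ 2 / ρ) * R ≤ 2 * S := by
      have h1 : ((α + β) ^ 2 / ρ) * R ≤ ((α + β) ^ 2 / ρ) * ((2 * ρ / (α + β) ^ 2) * S) := by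
        apply mul_le_mul_of_nonneg_left _ (by positivity)
        rw [hF2]; exact hF7
      have h2 : ((α + β) ^ 2 / ρ) * ((2 * ρ / (α + β) ^ 2) * S) = 2 * S := by
        field_simp
      linarith
    nlinarith [hSQ, hRS]
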